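/- If F is a family of subsets of {1,...,n} containing no two sets A, B with A a proper subset of B, then |F| ≤ C(n, floor(n/2)). -/

import Mathlib

/-- Sperner's Theorem (1928). -/
theorem sperner_theorem (n : ℕ) (F : Finset (Finset (Fin n)))
    (h : ∀ A ∈ F, ∀ B ∈ F, ¬ A ⊂ B) :
    F.card ≤ n.choose (n / 2) := by
  have : IsAntichain (· ⊆ ·) (F : Set (Finset (Fin n))) := by
    intro A hA B hB hne hsub
    exact h A hA B hB ⟨hsub, fun hBA => hne (le_antisymm hsub hBA)⟩
  simpa [Fintype.card_fin] using IsAntichain.sperner this
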